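/- For each N ≥ 1, (1/(N·2^N)) · Σ_{m=1}^{N} C(N-1, m) · max{N/2 − m − 1, m + 1 − N/2} ≤ (1/N) + (1/(2√(N-1))) for N ≥ 2 (i.e., the average deviation incentive is bounded by O(1/√N)). -/

import Mathlib

open Finset

lemma sum_choose_real (n : ℕ) : ∑ k ∈ range (n + 1), (n.choose k : ℝ) = 2 ^ n := by
  exact_mod_cast congrArg (Nat.cast : ℕ → ℝ) (Nat.sum_range_choose n)

lemma succ_mul_choose_real (n j : ℕ) :
    ((j : ℝ) + 1) * ((n + 1).choose (j + 1) : ℝ) = ((n : ℝ) + 1) * (n.choose j : ℝ) := by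
  have h := Nat.add_one_mul_choose_eq n j
  have h2 : ((Nat.succ n * n.choose j : ℕ) : ℝ) = (((n + 1).choose (j + 1) * (j + 1) : ℕ) : ℝ) :=
    congrArg _ h
  push_cast at h2
  linarith

lemma sum_k_choose_real (n : ℕ) :
    ∑ k ∈ range (n + 1), (k : ℝ) * (n.choose k : ℝ) = n * 2 ^ n / 2 := by
  cases n with
  | zero => simp
  | succ m =>
    rw [Finset.sum_range_succ']
    have e1 : ∑ j ∈ range (m + 1), ((j + 1 : ℕ) : ℝ) * ((m + 1).choose (j + 1) : ℝ)
        = ∑ j ∈ range (m + 1), ((m : ℝ) + 1) * (m.choose j : ℝ) := by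
      refine Finset.sum_congr rfl fun j _ => ?_
      push_cast
      exact succ_mul_choose_real m j
    rw [e1, ← Finset.mul_sum, sum_choose_real]
    push_cast
    ring

lemma sum_k2_choose_real (n : ℕ) :
    ∑ k ∈ range (n + 1), (k : ℝ) ^ 2 * (n.choose k : ℝ) = n * (n + 1) * 2 ^ n / 4 := by
  cases n with
  | zero => simp
  | succ m =>
    rw [Finset.sum_range_succ']
    have e1 : ∑ j ∈ range (m + 1), ((j + 1 : ℕ) : ℝ) ^ 2 * ((m + 1).choose (j + 1) : ℝ)
        = ∑ j ∈ range (m + 1),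
            (((m : ℝ) + 1) * ((j : ℝ) * (m.choose j : ℝ)) + ((m : ℝ) + 1) * (m.choose j : ℝ)) := by
      refine Finset.sum_congr rfl fun j _ => ?_
      have h := succ_mul_choose_real m j
      push_cast
      nlinarith [h]
    rw [e1, Finset.sum_add_distrib, ← Finset.mul_sum, ← Finset.mul_sum,
      sum_k_choose_real, sum_choose_real]
    push_cast
    ring

lemma sum_var_choose (n : ℕ) :
    ∑ k ∈ range (n + 1), (n.choose k : ℝ) * ((k : ℝ) - (n : ℝ) / 2) ^ 2 = 2 ^ n * (n : ℝ) / 4 := by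
  have e1 : ∑ k ∈ range (n + 1), (n.choose k : ℝ) * ((k : ℝ) - (n : ℝ) / 2) ^ 2
      = ∑ k ∈ range (n + 1), ((k : ℝ) ^ 2 * (n.choose k : ℝ)
          - (n : ℝ) * ((k : ℝ) * (n.choose k : ℝ)) + (n : ℝ) ^ 2 / 4 * (n.choose k : ℝ)) :=
    Finset.sum_congr rfl fun k _ => by ring
  rw [e1, Finset.sum_add_distrib, Finset.sum_sub_distrib, ← Finset.mul_sum, ← Finset.mul_sum,
    sum_k2_choose_real, sum_k_choose_real, sum_choose_real]
  ring

lemma sum_abs_dev_choose (n : ℕ) :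
    ∑ k ∈ range (n + 1), (n.choose k : ℝ) * |(k : ℝ) - (n : ℝ) / 2|
      ≤ 2 ^ n * Real.sqrt n / 2 := by
  have key := Finset.sum_sq_le_sum_mul_sum_of_sq_eq_mul (range (n + 1))
    (r := fun k => (n.choose k : ℝ) * |(k : ℝ) - (n : ℝ) / 2|)
    (f := fun k => (n.choose k : ℝ))
    (g := fun k => (n.choose k : ℝ) * ((k : ℝ) - (n : ℝ) / 2) ^ 2)
    (fun k _ => by positivity) (fun k _ => by positivity)
    (fun k _ => by rw [mul_pow, sq_abs]; ring)
  rw [sum_choose_real, sum_var_choose] at key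
  have hnn : (0:ℝ) ≤ ∑ k ∈ range (n + 1), (n.choose k : ℝ) * |(k : ℝ) - (n : ℝ) / 2| :=
    Finset.sum_nonneg fun k _ => by positivity
  have h2 : (2:ℝ) ^ n * (2 ^ n * (n : ℝ) / 4) = (2 ^ n * Real.sqrt n / 2) ^ 2 := by
    rw [div_pow, mul_pow, Real.sq_sqrt (Nat.cast_nonneg n)]
    ring
  rw [h2] at key
  exact (pow_le_pow_iff_left₀ hnn (by positivity) two_ne_zero).mp key

/-- For `N ≥ 2`, the average deviation incentive
`(1/(N·2^N)) · Σ_{m=1}^{N} C(N-1, m) · max{N/2 − m − 1, m + 1 − N/2}`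
is bounded by `1/N + 1/(2·√(N−1))`, i.e. it is `O(1/√N)`. -/
theorem pigou_avg_deviation_incentive_bound (N : ℕ) (hN : 2 ≤ N) :
    (1 / (N * 2 ^ N : ℝ)) * ∑ m ∈ Finset.Icc 1 N, ((N - 1).choose m : ℝ) *
        max ((N : ℝ) / 2 - (m : ℝ) - 1) ((m : ℝ) + 1 - (N : ℝ) / 2) ≤
      1 / N + 1 / (2 * Real.sqrt ((N : ℝ) - 1)) := by
  obtain ⟨n, rfl⟩ : ∃ n, N = n + 1 := ⟨N - 1, (Nat.succ_pred_eq_of_pos (by omega)).symm⟩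
  have hn1 : 1 ≤ n := by omega
  have hn1r : (1:ℝ) ≤ (n:ℝ) := by exact_mod_cast hn1
  have hcast : ((n + 1 : ℕ) : ℝ) = (n : ℝ) + 1 := by push_cast; ring
  have hmax : ∀ m : ℕ, max (((n:ℝ)+1) / 2 - (m : ℝ) - 1) ((m : ℝ) + 1 - ((n:ℝ)+1) / 2)
      ≤ |(m : ℝ) - (n:ℝ) / 2| + 1 / 2 := by
    intro m
    rw [max_le_iff]
    refine ⟨?_, ?_⟩
    · have := neg_abs_le ((m : ℝ) - (n:ℝ) / 2)
      linarith
    · have := le_abs_self ((m : ℝ) - (n:ℝ) / 2)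
      linarith
  have hub : ∑ m ∈ Finset.Icc 1 (n+1), ((n+1-1).choose m : ℝ) *
        max (((n+1:ℕ):ℝ) / 2 - (m : ℝ) - 1) ((m : ℝ) + 1 - ((n+1:ℕ):ℝ) / 2)
      ≤ 2 ^ n * Real.sqrt n / 2 + 2 ^ n / 2 := by
    have hsub : Finset.Icc 1 (n+1) ⊆ range (n + 2) := by
      intro x hx
      simp only [Finset.mem_Icc] at hx
      simp only [Finset.mem_range]; omega
    have step1 : ∑ m ∈ Finset.Icc 1 (n+1), ((n+1-1).choose m : ℝ) *
          max (((n+1:ℕ):ℝ) / 2 - (m : ℝ) - 1) ((m : ℝ) + 1 - ((n+1:ℕ):ℝ) / 2)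
        ≤ ∑ m ∈ range (n+2), (n.choose m : ℝ) * (|(m : ℝ) - (n:ℝ) / 2| + 1/2) := by
      refine le_trans (Finset.sum_le_sum_of_subset_of_nonneg hsub ?_) (Finset.sum_le_sum ?_)
      · intro m hmr hm
        have hmlt : m < n + 2 := Finset.mem_range.mp hmr
        simp only [Finset.mem_Icc, not_and, not_le] at hm
        have hm0 : m = 0 := by
          rcases Nat.eq_zero_or_pos m with h | h
          · exact h
          · omega
        subst hm0
        simp only [Nat.add_sub_cancel, Nat.choose_zero_right, Nat.cast_one, one_mul, hcast,
          Nat.cast_zero]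
        rw [le_max_iff]
        left
        linarith
      · intro m _
        have h1 := hmax m
        have h2 : (0:ℝ) ≤ ((n+1-1).choose m : ℝ) := Nat.cast_nonneg _
        simp only [Nat.add_sub_cancel] at h2 ⊢
        calc ((n.choose m : ℕ) : ℝ) *
              max (((n+1:ℕ):ℝ) / 2 - (m : ℝ) - 1) ((m : ℝ) + 1 - ((n+1:ℕ):ℝ) / 2)
            ≤ (n.choose m : ℝ) * (|(m : ℝ) - (n:ℝ) / 2| + 1/2) := by
              refine mul_le_mul_of_nonneg_left ?_ h2
              rw [hcast]; exact h1
          _ = _ := rfl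
    refine step1.trans ?_
    have step2 : ∑ m ∈ range (n+2), (n.choose m : ℝ) * (|(m : ℝ) - (n:ℝ) / 2| + 1/2)
        = ∑ m ∈ range (n+1), (n.choose m : ℝ) * (|(m : ℝ) - (n:ℝ) / 2| + 1/2) := by
      rw [Finset.sum_range_succ, Nat.choose_succ_self]
      simp
    rw [step2]
    have step3 : ∑ m ∈ range (n+1), (n.choose m : ℝ) * (|(m : ℝ) - (n:ℝ) / 2| + 1/2)
        = (∑ m ∈ range (n+1), (n.choose m : ℝ) * |(m : ℝ) - (n:ℝ) / 2|)
          + (∑ m ∈ range (n+1), (n.choose m : ℝ)) * (1/2) := by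
      rw [Finset.sum_mul, ← Finset.sum_add_distrib]
      exact Finset.sum_congr rfl fun m _ => by ring
    rw [step3, sum_choose_real]
    have := sum_abs_dev_choose n
    linarith
  have hsqrt : (0:ℝ) < Real.sqrt n := Real.sqrt_pos.mpr (by linarith)
  have hfinal : (1 / (((n+1:ℕ):ℝ) * 2 ^ (n+1))) * (2 ^ n * Real.sqrt n / 2 + 2 ^ n / 2)
      ≤ 1 / ((n+1:ℕ):ℝ) + 1 / (2 * Real.sqrt (((n+1:ℕ):ℝ) - 1)) := by
    have hsq : Real.sqrt (((n+1:ℕ):ℝ) - 1) = Real.sqrt n := by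
      congr 1; rw [hcast]; ring
    rw [hsq, hcast]
    have hNr : (0:ℝ) < (n:ℝ) + 1 := by positivity
    have hp : (0:ℝ) < 2 ^ n := by positivity
    have hs2 : Real.sqrt n * Real.sqrt n = (n:ℝ) := Real.mul_self_sqrt (Nat.cast_nonneg n)
    -- LHS = (√n + 1)/(4(n+1))
    have hL : (1 / (((n:ℝ)+1) * 2 ^ (n+1))) * (2 ^ n * Real.sqrt n / 2 + 2 ^ n / 2)
        = (Real.sqrt n + 1) / (4 * ((n:ℝ)+1)) := by
      rw [pow_succ]
      field_simp
      ring
    rw [hL]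
    have hb1 : Real.sqrt n / (4 * ((n:ℝ)+1)) ≤ 1 / (2 * Real.sqrt n) := by
      rw [div_le_div_iff₀ (by positivity) (by positivity)]
      nlinarith [hs2, hsqrt]
    have hb2 : 1 / (4 * ((n:ℝ)+1)) ≤ 1 / ((n:ℝ)+1) := by
      rw [div_le_div_iff₀ (by positivity) (by positivity)]
      linarith
    have hsplit : (Real.sqrt n + 1) / (4 * ((n:ℝ)+1))
        = Real.sqrt n / (4 * ((n:ℝ)+1)) + 1 / (4 * ((n:ℝ)+1)) := by
      ring
    rw [hsplit]
    linarith
  calc (1 / (((n+1:ℕ):ℝ) * 2 ^ (n+1))) * ∑ m ∈ Finset.Icc 1 (n+1), ((n+1-1).choose m : ℝ) *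
        max (((n+1:ℕ):ℝ) / 2 - (m : ℝ) - 1) ((m : ℝ) + 1 - ((n+1:ℕ):ℝ) / 2)
      ≤ (1 / (((n+1:ℕ):ℝ) * 2 ^ (n+1))) * (2 ^ n * Real.sqrt n / 2 + 2 ^ n / 2) := by
        refine mul_le_mul_of_nonneg_left hub ?_
        positivity
    _ ≤ _ := hfinal
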